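/- If G is a non-degenerate PCR over a PCS Σ and π : G → Ĝ is the canonical quotient onto its poc set quotient, then the dual map π° : Ĝ° → G° given by S ↦ π⁻¹(S) is a bijection. -/
import Mathlib


universe u v

structure PCS (α : Type*) where
  star : α → α
  zero : α
  star_star : ∀ a, star (star a) = a
  star_ne_self : ∀ a, star a ≠ a

variable {α : Type*}

/-- A pointed complemented relation (PCR) over the PCS `P`. -/
def IsPCR (P : PCS α) (G : Set (α × α)) : Prop :=
  (∀ a, (P.zero, a) ∈ G) ∧ ∀ a b, (a, b) ∈ G ↔ (P.star b, P.star a) ∈ G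

/-- `a ≤_G b`: the reflexive-transitive closure of the relation `G`. -/
def pcrLe (G : Set (α × α)) (a b : α) : Prop :=
  Relation.ReflTransGen (fun x y => (x, y) ∈ G) a b

/-- A set `S` is `G`-coherent if no `a, b ∈ S` satisfy `a ≤_G b*`. -/
def Coherent (P : PCS α) (G : Set (α × α)) (S : Set α) : Prop :=
  ∀ a ∈ S, ∀ b ∈ S, ¬ pcrLe G a (P.star b)

/-- Forward closure `↑S = {b | ∃ a ∈ S, a ≤_G b}`. -/
def upClosure (G : Set (α × α)) (S : Set α) : Set α :=
  {b | ∃ a ∈ S, pcrLe G a b}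

/-- Maximal `G`-coherent subsets; the members of the dual space `G°`. -/
def MaxCoherent (P : PCS α) (G : Set (α × α)) (S : Set α) : Prop :=
  Coherent P G S ∧ ∀ T, Coherent P G T → S ⊆ T → S = T

/-- `G` is non-degenerate: no `a` satisfies both `a ≤_G a*` and `a* ≤_G a`. -/
def Nondegenerate (P : PCS α) (G : Set (α × α)) : Prop :=
  ∀ a, ¬ (pcrLe G a (P.star a) ∧ pcrLe G (P.star a) a)

/-- A complete `*`-selection: exactly one of `a`, `a*` belongs to `S`, for each `a`. -/
def CompleteSel (P : PCS α) (S : Set α) : Prop :=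
  ∀ a, Xor' (a ∈ S) (P.star a ∈ S)

/-- The half-space `⟨S;G⟩ = {u ∈ G° : S ⊆ u}`. -/
def halfspace (P : PCS α) (G : Set (α × α)) (S : Set α) : Set (Set α) :=
  {u | MaxCoherent P G u ∧ S ⊆ u}

/-- Coherent projection `coh_G(T) = ↑T ∖ (↑T)*`. -/
def cohProj (P : PCS α) (G : Set (α × α)) (T : Set α) : Set α :=
  upClosure G T \ (P.star '' upClosure G T)

/-- Morphisms of PCRs. -/
def IsPCRHom {β : Type*} (P : PCS α) (Q : PCS β) (G : Set (α × α)) (H : Set (β × β))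
    (f : α → β) : Prop :=
  f P.zero = Q.zero ∧ (∀ a, f (P.star a) = Q.star (f a)) ∧
    ∀ a b, (a, b) ∈ G → pcrLe H (f a) (f b)

/-- A poc set: a PCR whose induced relation `≤_G` is antisymmetric and whose only
negligible element is `0`. -/
def IsPocSet (P : PCS α) (G : Set (α × α)) : Prop :=
  IsPCR P G ∧ (∀ a b, pcrLe G a b → pcrLe G b a → a = b) ∧
    ∀ a, pcrLe G a (P.star a) → a = P.zero

section PocAux

theorem pcrLe_star {α : Type*} {P : PCS α} {G : Set (α × α)} (hG : IsPCR P G) {a b : α}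
    (h : pcrLe G a b) : pcrLe G (P.star b) (P.star a) := by
  induction h with
  | refl => exact Relation.ReflTransGen.refl
  | @tail b c hab hbc ih =>
    exact Relation.ReflTransGen.trans (Relation.ReflTransGen.single ((hG.2 b c).mp hbc)) ih

theorem hom_pcrLe {α β : Type*} {P : PCS α} {Q : PCS β} {G : Set (α × α)} {H : Set (β × β)}
    {f : α → β} (hf : IsPCRHom P Q G H f) {a b : α} (h : pcrLe G a b) :
    pcrLe H (f a) (f b) := by
  induction h with
  | refl => exact Relation.ReflTransGen.refl
  | @tail b c hab hbc ih => exact ih.trans (hf.2.2 b c hbc)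

def pocNegl {α : Type*} (P : PCS α) (G : Set (α × α)) (a : α) : Prop :=
  pcrLe G a (P.star a)

def pocConegl {α : Type*} (P : PCS α) (G : Set (α × α)) (a : α) : Prop :=
  pcrLe G (P.star a) a

def pocEqv {α : Type*} (P : PCS α) (G : Set (α × α)) (a b : α) : Prop :=
  (pcrLe G a b ∧ pcrLe G b a) ∨ (pocNegl P G a ∧ pocNegl P G b) ∨
    (pocConegl P G a ∧ pocConegl P G b)

def pocR {α : Type*} (P : PCS α) (G : Set (α × α)) (a b : α) : Prop :=
  pcrLe G a b ∨ pocNegl P G a ∨ pocConegl P G b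

variable {α : Type*} {P : PCS α} {G : Set (α × α)}

theorem negl_of_le (hG : IsPCR P G) {a b : α} (h : pcrLe G a b) (hb : pocNegl P G b) :
    pocNegl P G a :=
  (h.trans hb).trans (pcrLe_star hG h)

theorem conegl_of_le (hG : IsPCR P G) {a b : α} (ha : pocConegl P G a) (h : pcrLe G a b) :
    pocConegl P G b :=
  ((pcrLe_star hG h).trans ha).trans h

theorem negl_conegl_absurd (hnd : Nondegenerate P G) {a : α} (h1 : pocNegl P G a)
    (h2 : pocConegl P G a) : False :=
  hnd a ⟨h1, h2⟩

theorem pocEqv_refl (a : α) : pocEqv P G a a :=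
  Or.inl ⟨Relation.ReflTransGen.refl, Relation.ReflTransGen.refl⟩

theorem pocEqv_symm {a b : α} (h : pocEqv P G a b) : pocEqv P G b a := by
  rcases h with ⟨h1, h2⟩ | ⟨h1, h2⟩ | ⟨h1, h2⟩
  · exact Or.inl ⟨h2, h1⟩
  · exact Or.inr (Or.inl ⟨h2, h1⟩)
  · exact Or.inr (Or.inr ⟨h2, h1⟩)

theorem pocEqv_trans (hG : IsPCR P G) (hnd : Nondegenerate P G) {a b c : α}
    (h : pocEqv P G a b) (h' : pocEqv P G b c) : pocEqv P G a c := by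
  rcases h with ⟨ab, ba⟩ | ⟨na, nb⟩ | ⟨ca, cb⟩ <;>
    rcases h' with ⟨bc, cb'⟩ | ⟨nb', nc⟩ | ⟨cb', cc⟩
  · exact Or.inl ⟨ab.trans bc, cb'.trans ba⟩
  · exact Or.inr (Or.inl ⟨negl_of_le hG ab nb', nc⟩)
  · exact Or.inr (Or.inr ⟨conegl_of_le hG cb' ba, cc⟩)
  · exact Or.inr (Or.inl ⟨na, negl_of_le hG cb' nb⟩)
  · exact Or.inr (Or.inl ⟨na, nc⟩)
  · exact absurd cb' (fun hc => negl_conegl_absurd hnd nb hc)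
  · exact Or.inr (Or.inr ⟨ca, conegl_of_le hG cb bc⟩)
  · exact absurd nb' (fun hn => negl_conegl_absurd hnd hn cb)
  · exact Or.inr (Or.inr ⟨ca, cc⟩)

theorem pocEqv_star (hG : IsPCR P G) {a b : α} (h : pocEqv P G a b) :
    pocEqv P G (P.star a) (P.star b) := by
  rcases h with ⟨h1, h2⟩ | ⟨h1, h2⟩ | ⟨h1, h2⟩
  · exact Or.inl ⟨pcrLe_star hG h2, pcrLe_star hG h1⟩
  · refine Or.inr (Or.inr ⟨?_, ?_⟩) <;> (unfold pocConegl; rw [P.star_star])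
    · exact h1
    · exact h2
  · refine Or.inr (Or.inl ⟨?_, ?_⟩) <;> (unfold pocNegl; rw [P.star_star])
    · exact h1
    · exact h2

theorem pocEqv_to_R {a b : α} (h : pocEqv P G a b) : pocR P G a b := by
  rcases h with ⟨h1, _⟩ | ⟨h1, _⟩ | ⟨_, h2⟩
  · exact Or.inl h1
  · exact Or.inr (Or.inl h1)
  · exact Or.inr (Or.inr h2)

theorem pocR_trans (hG : IsPCR P G) (hnd : Nondegenerate P G) {a b c : α}
    (h : pocR P G a b) (h' : pocR P G b c) : pocR P G a c := by
  rcases h with ab | na | cb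
  · rcases h' with bc | nb | cc
    · exact Or.inl (ab.trans bc)
    · exact Or.inr (Or.inl (negl_of_le hG ab nb))
    · exact Or.inr (Or.inr cc)
  · exact Or.inr (Or.inl na)
  · rcases h' with bc | nb | cc
    · exact Or.inr (Or.inr (conegl_of_le hG cb bc))
    · exact absurd nb (fun hn => negl_conegl_absurd hnd hn cb)
    · exact Or.inr (Or.inr cc)

theorem pocR_star (hG : IsPCR P G) {a b : α} (h : pocR P G a b) :
    pocR P G (P.star b) (P.star a) := by
  rcases h with ab | na | cb
  · exact Or.inl (pcrLe_star hG ab)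
  · refine Or.inr (Or.inr ?_)
    unfold pocConegl; rw [P.star_star]; exact na
  · refine Or.inr (Or.inl ?_)
    unfold pocNegl; rw [P.star_star]; exact cb

theorem pocR_antisymm (hG : IsPCR P G) (hnd : Nondegenerate P G) {a b : α}
    (h : pocR P G a b) (h' : pocR P G b a) : pocEqv P G a b := by
  rcases h with ab | na | cb
  · rcases h' with ba | nb | ca
    · exact Or.inl ⟨ab, ba⟩
    · exact Or.inr (Or.inl ⟨negl_of_le hG ab nb, nb⟩)
    · exact Or.inr (Or.inr ⟨ca, conegl_of_le hG ca ab⟩)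
  · rcases h' with ba | nb | ca
    · exact Or.inr (Or.inl ⟨na, negl_of_le hG ba na⟩)
    · exact Or.inr (Or.inl ⟨na, nb⟩)
    · exact absurd na (fun hn => negl_conegl_absurd hnd hn ca)
  · rcases h' with ba | nb | ca
    · exact Or.inr (Or.inr ⟨conegl_of_le hG cb ba, cb⟩)
    · exact absurd nb (fun hn => negl_conegl_absurd hnd hn cb)
    · exact Or.inr (Or.inr ⟨ca, cb⟩)

theorem pocNegl_zero (hG : IsPCR P G) : pocNegl P G P.zero :=
  Relation.ReflTransGen.single (hG.1 (P.star P.zero))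

end PocAux

def pocSetoid {α : Type*} (P : PCS α) (G : Set (α × α)) (hG : IsPCR P G)
    (hnd : Nondegenerate P G) : Setoid α :=
  ⟨pocEqv P G, ⟨pocEqv_refl, fun h => pocEqv_symm h, fun h h' => pocEqv_trans hG hnd h h'⟩⟩

def qPCS {α : Type*} (P : PCS α) (G : Set (α × α)) (hG : IsPCR P G)
    (hnd : Nondegenerate P G) : PCS (Quotient (pocSetoid P G hG hnd)) where
  star := Quotient.lift (fun a => Quotient.mk (pocSetoid P G hG hnd) (P.star a))
    (fun _ _ h => Quotient.sound (pocEqv_star hG h))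
  zero := Quotient.mk (pocSetoid P G hG hnd) P.zero
  star_star := by
    refine Quotient.ind (fun a => ?_)
    show Quotient.mk (pocSetoid P G hG hnd) (P.star (P.star a)) = _
    rw [P.star_star]
  star_ne_self := by
    refine Quotient.ind (fun a h => ?_)
    have h' : pocEqv P G (P.star a) a := Quotient.exact h
    rcases h' with ⟨h1, h2⟩ | ⟨h1, h2⟩ | ⟨h1, h2⟩
    · exact hnd a ⟨h2, h1⟩
    · unfold pocNegl at h1; rw [P.star_star] at h1
      exact hnd a ⟨h2, h1⟩
    · unfold pocConegl at h1; rw [P.star_star] at h1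
      exact hnd a ⟨h1, h2⟩

def qRel {α : Type*} (P : PCS α) (G : Set (α × α)) (hG : IsPCR P G)
    (hnd : Nondegenerate P G) :
    Set (Quotient (pocSetoid P G hG hnd) × Quotient (pocSetoid P G hG hnd)) :=
  {p | ∃ a b : α, p.1 = Quotient.mk (pocSetoid P G hG hnd) a ∧
    p.2 = Quotient.mk (pocSetoid P G hG hnd) b ∧ pocR P G a b}

theorem qRel_le_aux {α : Type*} (P : PCS α) (G : Set (α × α)) (hG : IsPCR P G)
    (hnd : Nondegenerate P G) {x y : Quotient (pocSetoid P G hG hnd)}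
    (h : pcrLe (qRel P G hG hnd) x y) :
    ∀ a b : α, x = Quotient.mk (pocSetoid P G hG hnd) a →
      y = Quotient.mk (pocSetoid P G hG hnd) b → pocR P G a b := by
  induction h with
  | refl =>
    intro a b hx hy
    exact pocEqv_to_R (Quotient.exact (hx.symm.trans hy))
  | @tail y z hxy hyz ih =>
    intro a b hx hz
    obtain ⟨c, d, hyc, hzd, Rcd⟩ := hyz
    have Rac := ih a c hx hyc
    have Rdb : pocR P G d b := pocEqv_to_R (Quotient.exact (hzd.symm.trans hz))
    exact pocR_trans hG hnd Rac (pocR_trans hG hnd Rcd Rdb)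

theorem qPoc {α : Type*} (P : PCS α) (G : Set (α × α)) (hG : IsPCR P G)
    (hnd : Nondegenerate P G) : IsPocSet (qPCS P G hG hnd) (qRel P G hG hnd) := by
  refine ⟨⟨?_, ?_⟩, ?_, ?_⟩
  · refine Quotient.ind (fun a => ?_)
    exact ⟨P.zero, a, rfl, rfl, Or.inr (Or.inl (pocNegl_zero hG))⟩
  · refine Quotient.ind (fun a => Quotient.ind (fun b => ?_))
    constructor
    · rintro ⟨c, d, h1, h2, Rcd⟩
      refine ⟨P.star b, P.star a, rfl, rfl, ?_⟩
      have eac : pocEqv P G a c := Quotient.exact h1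
      have ebd : pocEqv P G b d := Quotient.exact h2
      exact pocR_star hG
        (pocR_trans hG hnd (pocEqv_to_R eac)
          (pocR_trans hG hnd Rcd (pocEqv_to_R (pocEqv_symm ebd))))
    · rintro ⟨c, d, h1, h2, Rcd⟩
      refine ⟨a, b, rfl, rfl, ?_⟩
      have e1 : pocEqv P G (P.star a) d := Quotient.exact h2
      have e1' := pocEqv_star hG e1
      rw [P.star_star] at e1'
      have e2 : pocEqv P G (P.star b) c := Quotient.exact h1
      have e2' := pocEqv_star hG e2
      rw [P.star_star] at e2'
      exact pocR_trans hG hnd (pocEqv_to_R e1')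
        (pocR_trans hG hnd (pocR_star hG Rcd) (pocEqv_to_R (pocEqv_symm e2')))
  · refine Quotient.ind (fun a => Quotient.ind (fun b h h' => ?_))
    exact Quotient.sound (pocR_antisymm hG hnd
      (qRel_le_aux P G hG hnd h a b rfl rfl)
      (qRel_le_aux P G hG hnd h' b a rfl rfl))
  · refine Quotient.ind (fun a h => ?_)
    have hR : pocR P G a (P.star a) := qRel_le_aux P G hG hnd h a (P.star a) rfl rfl
    have na : pocNegl P G a := by
      rcases hR with h1 | h1 | h1
      · exact h1
      · exact h1
      · unfold pocConegl at h1; rw [P.star_star] at h1; exact h1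
    exact Quotient.sound (Or.inr (Or.inl ⟨na, pocNegl_zero hG⟩))

theorem qHom {α : Type*} (P : PCS α) (G : Set (α × α)) (hG : IsPCR P G)
    (hnd : Nondegenerate P G) :
    IsPCRHom P (qPCS P G hG hnd) G (qRel P G hG hnd)
      (fun a => Quotient.mk (pocSetoid P G hG hnd) a) :=
  ⟨rfl, fun _ => rfl, fun a b hab =>
    Relation.ReflTransGen.single ⟨a, b, rfl, rfl, Or.inl (Relation.ReflTransGen.single hab)⟩⟩

theorem preimage_coherent {α β : Type*} {P : PCS α} {Q : PCS β} {G : Set (α × α)}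
    {H : Set (β × β)} {π : α → β} (hπ : IsPCRHom P Q G H π) {S : Set β}
    (hS : Coherent Q H S) : Coherent P G (π ⁻¹' S) := by
  intro a ha b hb hle
  have h := hom_pcrLe hπ hle
  rw [hπ.2.1] at h
  exact hS _ ha _ hb h

theorem image_coherent {α β : Type*} {P : PCS α} {Q : PCS β} {G : Set (α × α)}
    {H : Set (β × β)} {π : α → β} (hπ : IsPCRHom P Q G H π)
    (hkey : ∀ x y : α, pcrLe H (π x) (π y) → pocR P G x y)
    {T : Set α} (hT : Coherent P G T) : Coherent Q H (π '' T) := by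
  rintro _ ⟨x, hx, rfl⟩ _ ⟨y, hy, rfl⟩ hle
  rw [← hπ.2.1] at hle
  rcases hkey _ _ hle with h | h | h
  · exact hT x hx y hy h
  · exact hT x hx x hx h
  · unfold pocConegl at h
    rw [P.star_star] at h
    exact hT y hy y hy h

theorem mem_of_pocEqv {α : Type*} {P : PCS α} {G : Set (α × α)} (hG : IsPCR P G)
    (hnd : Nondegenerate P G) {U : Set α} (hU : MaxCoherent P G U) {u a : α}
    (hu : u ∈ U) (h : pocEqv P G u a) : a ∈ U := by
  have hcoh : Coherent P G (insert a U) := by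
    rcases h with ⟨hua, hau⟩ | ⟨h1, h2⟩ | ⟨h1, h2⟩
    · intro x hx y hy hxy
      rcases hx with rfl | hx <;> rcases hy with rfl | hy
      · exact hU.1 u hu u hu (hua.trans (hxy.trans (pcrLe_star hG hua)))
      · exact hU.1 u hu y hy (hua.trans hxy)
      · exact hU.1 x hx u hu (hxy.trans (pcrLe_star hG hua))
      · exact hU.1 x hx y hy hxy
    · exact absurd h1 (hU.1 u hu u hu)
    · intro x hx y hy hxy
      rcases hx with rfl | hx <;> rcases hy with rfl | hy
      · exact hnd _ ⟨hxy, h2⟩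
      · have hy2 := pcrLe_star hG hxy
        rw [P.star_star] at hy2
        exact hU.1 y hy y hy (hy2.trans (h2.trans hxy))
      · have ha2 := pcrLe_star hG hxy
        rw [P.star_star] at ha2
        exact hU.1 x hx x hx (hxy.trans (h2.trans ha2))
      · exact hU.1 x hx y hy hxy
  have heq := hU.2 _ hcoh (Set.subset_insert _ _)
  rw [heq]
  exact Set.mem_insert _ _

/-- The dual map of the canonical poc quotient is a bijection of dual spaces. -/
theorem stmt5 {α : Type u} {β : Type u} (P : PCS α) (Q : PCS β)
    (G : Set (α × α)) (H : Set (β × β)) (hG : IsPCR P G) (hnd : Nondegenerate P G)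
    (hQ : IsPocSet Q H) (π : α → β) (hπ : IsPCRHom P Q G H π)
    (hsurj : Function.Surjective π)
    (huniv : ∀ (γ : Type u) (R : PCS γ) (K : Set (γ × γ)), IsPocSet R K →
      ∀ f : α → γ, IsPCRHom P R G K f →
        ∃! g : β → γ, IsPCRHom Q R H K g ∧ f = g ∘ π) :
    Set.BijOn (fun S : Set β => π ⁻¹' S)
      {S | MaxCoherent Q H S} {S | MaxCoherent P G S} := by
  classical
  obtain ⟨g, ⟨hg, hfact⟩, -⟩ :=
    huniv (Quotient (pocSetoid P G hG hnd)) (qPCS P G hG hnd) (qRel P G hG hnd)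
      (qPoc P G hG hnd) (fun a => Quotient.mk (pocSetoid P G hG hnd) a) (qHom P G hG hnd)
  have hfx : ∀ x : α, Quotient.mk (pocSetoid P G hG hnd) x = g (π x) := fun x =>
    congrFun hfact x
  have keyEq : ∀ x y : α, π x = π y → pocEqv P G x y := by
    intro x y h
    refine Quotient.exact (s := pocSetoid P G hG hnd) ?_
    rw [hfx x, hfx y, h]
  have keyLe : ∀ x y : α, pcrLe H (π x) (π y) → pocR P G x y := by
    intro x y h
    have h' := hom_pcrLe hg h
    rw [← hfx x, ← hfx y] at h'
    exact qRel_le_aux P G hG hnd h' x y rfl rfl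
  refine ⟨?_, ?_, ?_⟩
  · -- MapsTo
    intro S hS
    refine ⟨preimage_coherent hπ hS.1, ?_⟩
    intro T hT hsub
    have himg : Coherent Q H (π '' T) := image_coherent hπ keyLe hT
    have hSsub : S ⊆ π '' T := by
      intro s hs
      obtain ⟨a, rfl⟩ := hsurj s
      exact ⟨a, hsub hs, rfl⟩
    have hST := hS.2 _ himg hSsub
    refine Set.Subset.antisymm hsub ?_
    intro t ht
    have hmem : π t ∈ π '' T := ⟨t, ht, rfl⟩
    rw [← hST] at hmem
    exact hmem
  · -- InjOn
    intro S1 _ S2 _ h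
    have h' := congrArg (Set.image π) h
    rwa [Set.image_preimage_eq _ hsurj, Set.image_preimage_eq _ hsurj] at h'
  · -- SurjOn
    intro U hU
    have hpre : π ⁻¹' (π '' U) = U := by
      refine Set.Subset.antisymm ?_ (Set.subset_preimage_image π U)
      rintro a ⟨u, hu, hequ⟩
      exact mem_of_pocEqv hG hnd hU hu (keyEq u a hequ)
    have hSmax : MaxCoherent Q H (π '' U) := by
      refine ⟨image_coherent hπ keyLe hU.1, ?_⟩
      intro T hT hsub
      have hUsub : U ⊆ π ⁻¹' T := fun u hu => hsub ⟨u, hu, rfl⟩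
      have hUeq := hU.2 _ (preimage_coherent hπ hT) hUsub
      refine Set.Subset.antisymm hsub ?_
      intro t ht
      obtain ⟨a, rfl⟩ := hsurj t
      have haU : a ∈ U := by rw [hUeq]; exact ht
      exact ⟨a, haU, rfl⟩
    exact ⟨π '' U, hSmax, hpre⟩
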